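/- Let W_X, A_X, W_Y, A_Y be finite sets (Finsets) with W_X ⊆ A_X and W_Y ⊆ A_Y, and let ε' be a real number with 0 ≤ ε' < 1. Assume (1−ε') · |A_X| ≤ |W_X|, (1−ε') · |A_Y| ≤ |W_Y|, and W_X ∪ W_Y is nonempty. Then J(A_X, A_Y) ≥ ((1−ε')/(1+ε')) · J(W_X, W_Y). (The Jaccard similarity of the buckets is at least (1−ε')/(1+ε') times that of the windows.) -/

import Mathlib

theorem jaccard_bucket_lower_bound {α : Type*} [DecidableEq α]
    (WX AX WY AY : Finset α) (hX : WX ⊆ AX) (hY : WY ⊆ AY)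
    (ε' : ℝ) (hε0 : 0 ≤ ε') (hε1 : ε' < 1)
    (hAX : (1 - ε') * (AX.card : ℝ) ≤ (WX.card : ℝ))
    (hAY : (1 - ε') * (AY.card : ℝ) ≤ (WY.card : ℝ))
    (hne : (WX ∪ WY).Nonempty) :
    ((AX ∩ AY).card : ℝ) / ((AX ∪ AY).card : ℝ) ≥
      ((1 - ε') / (1 + ε')) * (((WX ∩ WY).card : ℝ) / ((WX ∪ WY).card : ℝ)) := by
  have h1 : ((WX ∩ WY).card : ℝ) ≤ ((AX ∩ AY).card : ℝ) := by
    exact_mod_cast Finset.card_le_card (Finset.inter_subset_inter hX hY)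
  have h2 : ((WX ∩ WY).card : ℝ) ≤ ((WX ∪ WY).card : ℝ) := by
    exact_mod_cast Finset.card_le_card (Finset.inter_subset_union)
  have h3 : ((WX ∪ WY).card : ℝ) ≤ ((AX ∪ AY).card : ℝ) := by
    exact_mod_cast Finset.card_le_card (Finset.union_subset_union hX hY)
  have hd : 0 < ((WX ∪ WY).card : ℝ) := by
    exact_mod_cast Finset.card_pos.mpr hne
  have hb : 0 < ((AX ∪ AY).card : ℝ) := lt_of_lt_of_le hd h3
  have hsumA : ((AX ∪ AY).card : ℝ) + ((AX ∩ AY).card : ℝ) = (AX.card : ℝ) + (AY.card : ℝ) := by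
    exact_mod_cast Finset.card_union_add_card_inter AX AY
  have hsumW : ((WX ∪ WY).card : ℝ) + ((WX ∩ WY).card : ℝ) = (WX.card : ℝ) + (WY.card : ℝ) := by
    exact_mod_cast Finset.card_union_add_card_inter WX WY
  have hc0 : 0 ≤ ((WX ∩ WY).card : ℝ) := by positivity
  rw [ge_iff_le, div_mul_div_comm, div_le_div_iff₀ (by positivity) hb]
  nlinarith [mul_nonneg hc0 hε0, mul_le_mul_of_nonneg_left h1 hc0,
    mul_le_mul_of_nonneg_right h2 hε0, mul_nonneg hε0 (sub_nonneg.mpr h1),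
    mul_le_mul_of_nonneg_left h2 (mul_nonneg hε0 hε0)]
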